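/- An inverse sequence of groups is stable (pro-isomorphic to a constant sequence of identity maps) if and only if it is both pro-monomorphic and pro-epimorphic. -/

import Mathlib

open CategoryTheory

universe u

/-- The composition of the bonding maps of an inverse sequence of groups,
`G j ⟶ G i` for `i ≤ j`. -/
def bondComp (G : ℕ → GrpCat.{u}) (f : ∀ i, G (i + 1) ⟶ G i) :
    (i j : ℕ) → i ≤ j → (G j ⟶ G i)
  | i, 0, h => by
      obtain rfl : i = 0 := Nat.le_zero.mp h
      exact 𝟙 (G 0)
  | i, j + 1, h =>
      if h' : i = j + 1 then by subst h'; exact 𝟙 (G (j + 1))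
      else f j ≫ bondComp G f i j (by omega)

section bondLemmas
variable (G : ℕ → GrpCat.{u}) (f : ∀ i, G (i + 1) ⟶ G i)

lemma bondComp_refl (i : ℕ) (h : i ≤ i) : bondComp G f i i h = 𝟙 (G i) := by
  cases i with
  | zero => rfl
  | succ j => simp [bondComp]

lemma bondComp_succ (i j : ℕ) (h : i ≤ j) :
    bondComp G f i (j + 1) (Nat.le_succ_of_le h) = f j ≫ bondComp G f i j h := by
  rw [bondComp, dif_neg (by omega)]

lemma Grp_comp_apply {A B C : GrpCat.{u}} (h : A ⟶ B) (g : B ⟶ C) (x : A) :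
    (h ≫ g) x = g (h x) := rfl

lemma bondComp_trans (i j l : ℕ) (h1 : i ≤ j) (h2 : j ≤ l) :
    bondComp G f i l (h1.trans h2) = bondComp G f j l h2 ≫ bondComp G f i j h1 := by
  induction l with
  | zero =>
      obtain rfl : j = 0 := Nat.le_zero.mp h2
      obtain rfl : i = 0 := Nat.le_zero.mp h1
      simp [bondComp_refl]
  | succ l ih =>
      by_cases hj : j = l + 1
      · subst hj
        rw [bondComp_refl]
        simp
      · have h2' : j ≤ l := by omega
        have h1' : i ≤ l := h1.trans h2'
        have e1 : bondComp G f i (l + 1) (h1.trans h2) = f l ≫ bondComp G f i l h1' :=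
          bondComp_succ G f i l h1'
        have e2 : bondComp G f j (l + 1) h2 = f l ≫ bondComp G f j l h2' :=
          bondComp_succ G f j l h2'
        rw [e1, e2, ih h2', Category.assoc]

lemma bondComp_apply (i j l : ℕ) (h1 : i ≤ j) (h2 : j ≤ l) (x : G l) :
    bondComp G f i l (h1.trans h2) x = bondComp G f i j h1 (bondComp G f j l h2 x) := by
  rw [bondComp_trans G f i j l h1 h2]; rfl

lemma bondComp_injective (hinj : ∀ i, Function.Injective (f i)) (i j : ℕ) (h : i ≤ j) :
    Function.Injective (bondComp G f i j h) := by
  induction j with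
  | zero =>
      obtain rfl : i = 0 := Nat.le_zero.mp h
      rw [bondComp_refl]; exact fun a b hab => hab
  | succ j ih =>
      by_cases hij : i = j + 1
      · subst hij; rw [bondComp_refl]; exact fun a b hab => hab
      · have h' : i ≤ j := by omega
        rw [show h = Nat.le_succ_of_le h' from rfl, bondComp_succ G f i j h']
        show Function.Injective (⇑(bondComp G f i j h') ∘ ⇑(f j))
        exact Function.Injective.comp (ih h') (hinj j)

lemma bondComp_surjective (hs : ∀ i, Function.Surjective (f i)) (i j : ℕ) (h : i ≤ j) :
    Function.Surjective (bondComp G f i j h) := by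
  induction j with
  | zero =>
      obtain rfl : i = 0 := Nat.le_zero.mp h
      rw [bondComp_refl]; exact fun a => ⟨a, rfl⟩
  | succ j ih =>
      by_cases hij : i = j + 1
      · subst hij; rw [bondComp_refl]; exact fun a => ⟨a, rfl⟩
      · have h' : i ≤ j := by omega
        rw [show h = Nat.le_succ_of_le h' from rfl, bondComp_succ G f i j h']
        show Function.Surjective (⇑(bondComp G f i j h') ∘ ⇑(f j))
        exact Function.Surjective.comp (ih h') (hs j)

lemma bondComp_const (K : GrpCat.{u}) (i j : ℕ) (h : i ≤ j) :
    bondComp (fun _ => K) (fun _ => 𝟙 K) i j h = 𝟙 K := by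
  induction j with
  | zero => obtain rfl : i = 0 := Nat.le_zero.mp h; rfl
  | succ j ih =>
      by_cases hij : i = j + 1
      · subst hij; exact bondComp_refl _ _ _ _
      · have h' : i ≤ j := by omega
        rw [show h = Nat.le_succ_of_le h' from rfl, bondComp_succ _ _ i j h', ih h']
        simp

end bondLemmas

/-- A pro-isomorphism (commuting ladder diagram after passing to subsequences)
between two inverse sequences of groups. -/
structure ProIso (G : ℕ → GrpCat.{u}) (f : ∀ i, G (i + 1) ⟶ G i)
    (H : ℕ → GrpCat.{u}) (g : ∀ i, H (i + 1) ⟶ H i) where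
  I : ℕ → ℕ
  J : ℕ → ℕ
  strictI : StrictMono I
  strictJ : StrictMono J
  hIJ : ∀ k, I k ≤ J k
  hJI : ∀ k, J k ≤ I (k + 1)
  d : ∀ k, H (J k) ⟶ G (I k)
  u : ∀ k, G (I (k + 1)) ⟶ H (J k)
  comm₁ : ∀ k, u k ≫ d k =
    bondComp G f (I k) (I (k + 1)) (le_of_lt (strictI (Nat.lt_succ_self k)))
  comm₂ : ∀ k, d (k + 1) ≫ u k =
    bondComp H g (J k) (J (k + 1)) (le_of_lt (strictJ (Nat.lt_succ_self k)))

section ladder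
variable {G : ℕ → GrpCat.{u}} {f : ∀ i, G (i + 1) ⟶ G i}
variable {H : ℕ → GrpCat.{u}} {g : ∀ i, H (i + 1) ⟶ H i}

lemma ProIso.d_injective (P : ProIso G f H g) (hg : ∀ i, Function.Injective (g i)) (k : ℕ) :
    Function.Injective (P.d (k + 1)) := by
  have h1 : Function.Injective (⇑(P.u k) ∘ ⇑(P.d (k + 1))) := by
    show Function.Injective ⇑(P.d (k + 1) ≫ P.u k)
    rw [P.comm₂]
    exact bondComp_injective H g hg _ _ _
  exact Function.Injective.of_comp h1

lemma ProIso.u_surjective (P : ProIso G f H g) (hg : ∀ i, Function.Surjective (g i)) (k : ℕ) :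
    Function.Surjective (P.u k) := by
  have h1 : Function.Surjective (⇑(P.u k) ∘ ⇑(P.d (k + 1))) := by
    show Function.Surjective ⇑(P.d (k + 1) ≫ P.u k)
    rw [P.comm₂]
    exact bondComp_surjective H g hg _ _ _
  exact Function.Surjective.of_comp h1

lemma ProIso.monoStep (P : ProIso G f H g) (hg : ∀ i, Function.Injective (g i))
    (k l : ℕ) (hk : 1 ≤ k) (hl : P.I (k + 2) ≤ l) (x : G l)
    (h1 : P.I k ≤ l) (h2 : P.I (k + 1) ≤ l)
    (hx : bondComp G f (P.I k) l h1 x = 1) :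
    bondComp G f (P.I (k + 1)) l h2 x = 1 := by
  obtain ⟨k, rfl⟩ : ∃ k', k = k' + 1 := ⟨k - 1, by omega⟩
  have mI := P.strictI.monotone
  have a12 : P.I (k + 1) ≤ P.I (k + 2) := mI (by omega)
  have a23 : P.I (k + 2) ≤ P.I (k + 3) := mI (by omega)
  set y := bondComp G f (P.I (k + 3)) l hl x with hy
  have hx' : bondComp G f (P.I (k + 1)) (P.I (k + 3)) (a12.trans a23) y = 1 := by
    rw [hy, ← bondComp_apply G f (P.I (k + 1)) (P.I (k + 3)) l (a12.trans a23) hl x]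
    exact hx
  have c1 : ∀ w, bondComp G f (P.I (k + 1)) (P.I (k + 2)) a12 w = P.d (k + 1) (P.u (k + 1) w) := by
    intro w
    have h := P.comm₁ (k + 1)
    calc bondComp G f (P.I (k + 1)) (P.I (k + 2)) a12 w
        = (P.u (k + 1) ≫ P.d (k + 1)) w := by rw [h]
      _ = P.d (k + 1) (P.u (k + 1) w) := rfl
  have c2 : ∀ w, bondComp G f (P.I (k + 2)) (P.I (k + 3)) a23 w = P.d (k + 2) (P.u (k + 2) w) := by
    intro w
    have h := P.comm₁ (k + 2)
    calc bondComp G f (P.I (k + 2)) (P.I (k + 3)) a23 w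
        = (P.u (k + 2) ≫ P.d (k + 2)) w := by rw [h]
      _ = P.d (k + 2) (P.u (k + 2) w) := rfl
  rw [bondComp_apply G f (P.I (k + 1)) (P.I (k + 2)) (P.I (k + 3)) a12 a23 y, c2, c1] at hx'
  have w1 : P.u (k + 1) (P.d (k + 2) (P.u (k + 2) y)) = 1 := by
    apply P.d_injective hg k
    rw [hx', map_one]
  have w2 : P.u (k + 2) y = 1 := by
    apply bondComp_injective H g hg (P.J (k + 1)) (P.J (k + 2))
      (le_of_lt (P.strictJ (Nat.lt_succ_self (k + 1))))
    have hcomp : (P.d (k + 2) ≫ P.u (k + 1)) (P.u (k + 2) y) = 1 := w1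
    rw [P.comm₂ (k + 1)] at hcomp
    rw [hcomp, map_one]
  rw [bondComp_apply G f (P.I (k + 2)) (P.I (k + 3)) l a23 hl x, ← hy, c2, w2, map_one]

lemma ProIso.monoChain (P : ProIso G f H g) (hg : ∀ i, Function.Injective (g i))
    (a b l : ℕ) (ha : 1 ≤ a) (hab : a ≤ b) (hl : P.I (b + 1) ≤ l) (x : G l)
    (h1 : P.I a ≤ l) (h2 : P.I b ≤ l)
    (hx : bondComp G f (P.I a) l h1 x = 1) :
    bondComp G f (P.I b) l h2 x = 1 := by
  induction b, hab using Nat.le_induction with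
  | base => exact hx
  | succ b hab ih =>
    have mI := P.strictI.monotone
    have hl' : P.I (b + 1) ≤ l := le_trans (mI (by omega)) hl
    have h2' : P.I b ≤ l := le_trans (mI (by omega)) hl
    exact P.monoStep hg b l (le_trans ha hab) hl x h2' h2 (ih hl' h2')

lemma ProIso.epiStep (P : ProIso G f H g) (hg : ∀ i, Function.Surjective (g i))
    (k : ℕ) (h1 : P.I k ≤ P.I (k + 1)) (h2 : P.I k ≤ P.I (k + 2)) :
    Set.range ⇑(bondComp G f (P.I k) (P.I (k + 1)) h1)
      ⊆ Set.range ⇑(bondComp G f (P.I k) (P.I (k + 2)) h2) := by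
  rintro y ⟨z, rfl⟩
  have a12 : P.I (k + 1) ≤ P.I (k + 2) := (P.strictI (Nat.lt_succ_self (k + 1))).le
  obtain ⟨v, hv⟩ := bondComp_surjective H g hg (P.J k) (P.J (k + 1))
    (le_of_lt (P.strictJ (Nat.lt_succ_self k))) (P.u k z)
  obtain ⟨w, hw⟩ := P.u_surjective hg (k + 1) v
  refine ⟨w, ?_⟩
  have c1 : ∀ t, bondComp G f (P.I k) (P.I (k + 1)) h1 t = P.d k (P.u k t) := by
    intro t
    calc bondComp G f (P.I k) (P.I (k + 1)) h1 t
        = (P.u k ≫ P.d k) t := by rw [P.comm₁ k]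
      _ = P.d k (P.u k t) := rfl
  have c2 : ∀ t, bondComp G f (P.I (k + 1)) (P.I (k + 2)) a12 t
      = P.d (k + 1) (P.u (k + 1) t) := by
    intro t
    calc bondComp G f (P.I (k + 1)) (P.I (k + 2)) a12 t
        = (P.u (k + 1) ≫ P.d (k + 1)) t := by rw [P.comm₁ (k + 1)]
      _ = P.d (k + 1) (P.u (k + 1) t) := rfl
  have hbd : P.u k (P.d (k + 1) v) = P.u k z := by
    have h := P.comm₂ k
    calc P.u k (P.d (k + 1) v) = (P.d (k + 1) ≫ P.u k) v := rfl
      _ = P.u k z := by rw [h]; exact hv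
  rw [bondComp_apply G f (P.I k) (P.I (k + 1)) (P.I (k + 2)) h1 a12 w, c2, hw, c1, c1, hbd]

lemma ProIso.epiChain (P : ProIso G f H g) (hg : ∀ i, Function.Surjective (g i))
    (a b : ℕ) (hab : a ≤ b) (h1 : P.I a ≤ P.I (a + 1)) (h2 : P.I a ≤ P.I (b + 1)) :
    Set.range ⇑(bondComp G f (P.I a) (P.I (a + 1)) h1)
      ⊆ Set.range ⇑(bondComp G f (P.I a) (P.I (b + 1)) h2) := by
  induction b, hab using Nat.le_induction with
  | base => exact subset_rfl
  | succ b hab ih =>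
    have mI := P.strictI.monotone
    have hab1 : P.I a ≤ P.I (b + 1) := mI (by omega)
    refine subset_trans (ih hab1) ?_
    rintro y ⟨z, rfl⟩
    have hb12 : P.I (b + 1) ≤ P.I (b + 2) := mI (by omega)
    have hb02 : P.I b ≤ P.I (b + 2) := mI (by omega)
    have hb01 : P.I b ≤ P.I (b + 1) := mI (by omega)
    have hab0 : P.I a ≤ P.I b := mI hab
    obtain ⟨w, hw⟩ := P.epiStep hg b hb01 hb02 ⟨z, rfl⟩
    refine ⟨w, ?_⟩
    rw [bondComp_apply G f (P.I a) (P.I b) (P.I (b + 2)) hab0 hb02 w, hw,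
      ← bondComp_apply G f (P.I a) (P.I b) (P.I (b + 1)) hab0 hb01 z]

lemma ProIso.epiRange (P : ProIso G f H g) (hg : ∀ i, Function.Surjective (g i))
    (a l : ℕ) (hl : P.I (a + 1) ≤ l) (h1 : P.I a ≤ l) (h2 : P.I a ≤ P.I (a + 1)) :
    Set.range ⇑(bondComp G f (P.I a) l h1)
      = Set.range ⇑(bondComp G f (P.I a) (P.I (a + 1)) h2) := by
  apply subset_antisymm
  · rintro y ⟨x, rfl⟩
    exact ⟨bondComp G f (P.I (a + 1)) l hl x,
      (bondComp_apply G f (P.I a) (P.I (a + 1)) l h2 hl x).symm⟩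
  · have hal : a ≤ l := le_trans (Nat.le_succ a) (le_trans P.strictI.le_apply hl)
    have hll : l ≤ P.I (l + 1) := le_trans (Nat.le_succ l) P.strictI.le_apply
    have h3 : P.I a ≤ P.I (l + 1) := P.strictI.monotone (by omega)
    refine subset_trans (P.epiChain hg a l hal h2 h3) ?_
    rintro y ⟨z, rfl⟩
    exact ⟨bondComp G f l (P.I (l + 1)) hll z,
      (bondComp_apply G f (P.I a) l (P.I (l + 1)) h1 hll z).symm⟩

lemma ProIso.epiGen (P : ProIso G f H g) (hg : ∀ i, Function.Surjective (g i)) (i : ℕ) :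
    ∃ j, i ≤ j ∧ ∀ l (_ : j ≤ l) (h1 : i ≤ l) (h2 : i ≤ j),
      Set.range ⇑(bondComp G f i l h1) = Set.range ⇑(bondComp G f i j h2) := by
  have hi : i ≤ P.I i := P.strictI.le_apply
  have hI : P.I i ≤ P.I (i + 1) := P.strictI.monotone (Nat.le_succ i)
  refine ⟨P.I (i + 1), le_trans hi hI, ?_⟩
  intro l hl h1 h2
  have hIl : P.I i ≤ l := le_trans hI hl
  have decomp : ∀ m (hm : P.I i ≤ m) (him : i ≤ m),
      Set.range ⇑(bondComp G f i m him)
        = ⇑(bondComp G f i (P.I i) hi) '' Set.range ⇑(bondComp G f (P.I i) m hm) := by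
    intro m hm him
    have hfe : ⇑(bondComp G f i m him)
        = ⇑(bondComp G f i (P.I i) hi) ∘ ⇑(bondComp G f (P.I i) m hm) :=
      funext (fun x => bondComp_apply G f i (P.I i) m hi hm x)
    rw [hfe, Set.range_comp]
  rw [decomp l hIl h1, decomp (P.I (i + 1)) hI h2,
    P.epiRange hg i l hl hIl hI]

end ladder

/-- An inverse sequence of groups is *pro-monomorphic* if it is pro-isomorphic to
an inverse sequence of injective homomorphisms. -/
def IsProMono (G : ℕ → GrpCat.{u}) (f : ∀ i, G (i + 1) ⟶ G i) : Prop :=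
  ∃ (H : ℕ → GrpCat.{u}) (g : ∀ i, H (i + 1) ⟶ H i),
    (∀ i, Function.Injective (g i)) ∧ Nonempty (ProIso G f H g)

/-- An inverse sequence of groups is *pro-epimorphic* (semistable) if it is
pro-isomorphic to an inverse sequence of surjective homomorphisms. -/
def IsProEpi (G : ℕ → GrpCat.{u}) (f : ∀ i, G (i + 1) ⟶ G i) : Prop :=
  ∃ (H : ℕ → GrpCat.{u}) (g : ∀ i, H (i + 1) ⟶ H i),
    (∀ i, Function.Surjective (g i)) ∧ Nonempty (ProIso G f H g)

/-- An inverse sequence of groups is *stable* if it is pro-isomorphic to a constant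
inverse sequence of identity maps. -/
def IsStable (G : ℕ → GrpCat.{u}) (f : ∀ i, G (i + 1) ⟶ G i) : Prop :=
  ∃ K : GrpCat.{u}, Nonempty (ProIso G f (fun _ => K) (fun _ => 𝟙 K))

/-- An inverse sequence of groups is stable if and only if it is both
pro-monomorphic and pro-epimorphic. -/
theorem isStable_iff_isProMono_and_isProEpi (G : ℕ → GrpCat.{u})
    (f : ∀ i, G (i + 1) ⟶ G i) :
    IsStable G f ↔ IsProMono G f ∧ IsProEpi G f := by
  constructor
  · rintro ⟨K, ⟨P⟩⟩
    exact ⟨⟨fun _ => K, fun _ => 𝟙 K, fun _ a b hab => hab, ⟨P⟩⟩,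
           ⟨fun _ => K, fun _ => 𝟙 K, fun _ a => ⟨a, rfl⟩, ⟨P⟩⟩⟩
  · rintro ⟨⟨Hm, gm, hgm, ⟨Pm⟩⟩, ⟨He, ge, hge, ⟨Pe⟩⟩⟩
    classical
    have mI := Pm.strictI.monotone
    choose e he1 he2 using Pe.epiGen hge
    -- index selection
    let s : ℕ → ℕ := fun k => Nat.rec 1 (fun _ sk => max (sk + 1) (e (Pm.I sk))) k
    have hs_succ : ∀ k, s (k + 1) = max (s k + 1) (e (Pm.I (s k))) := fun k => rfl
    have hs_mono : StrictMono s := strictMono_nat_of_lt_succ (fun k => by rw [hs_succ]; omega)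
    have hs1 : ∀ k, 1 ≤ s k := fun k => Nat.one_le_iff_ne_zero.mpr (by
      cases k with
      | zero => exact one_ne_zero
      | succ k => rw [hs_succ]; omega)
    have hs_e : ∀ k, e (Pm.I (s k)) ≤ s (k + 1) := fun k => by
      rw [hs_succ]; exact le_max_right _ _
    set n : ℕ → ℕ := fun k => Pm.I (s k) with hn_def
    have hn_mono : StrictMono n := fun a b hab => Pm.strictI (hs_mono hab)
    have hn_le : ∀ k, n k ≤ n (k + 1) := fun k => (hn_mono (Nat.lt_succ_self k)).le
    have hn_le2 : ∀ k, n k ≤ n (k + 2) := fun k => (hn_le k).trans (hn_le (k + 1))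
    -- key properties
    have key1 : ∀ k (x : G (n (k + 2))),
        bondComp G f (n k) (n (k + 2)) (hn_le2 k) x = 1 →
        bondComp G f (n (k + 1)) (n (k + 2)) (hn_le (k + 1)) x = 1 := by
      intro k x hx
      exact Pm.monoChain hgm (s k) (s (k + 1)) (n (k + 2)) (hs1 k)
        (hs_mono.monotone (Nat.le_succ k))
        (mI (by have hlt : s (k + 1) < s (k + 2) := hs_mono (Nat.lt_succ_self (k + 1)); omega))
        x (hn_le2 k) (hn_le (k + 1)) hx
    have key2 : ∀ k,
        Set.range ⇑(bondComp G f (n k) (n (k + 2)) (hn_le2 k))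
          = Set.range ⇑(bondComp G f (n k) (n (k + 1)) (hn_le k)) := by
      intro k
      have hj1 : e (n k) ≤ n (k + 1) := by
        exact le_trans (hs_e k) Pm.strictI.le_apply
      have hj2 : e (n k) ≤ n (k + 2) := le_trans hj1 (hn_le (k + 1))
      have hek : n k ≤ e (n k) := he1 (n k)
      rw [he2 (n k) (n (k + 2)) hj2 (hn_le2 k) hek,
        he2 (n k) (n (k + 1)) hj1 (hn_le k) hek]
    -- the construction
    set Φ : ∀ k, (G (n (k + 1)) →* G (n k)) :=
      fun k => (bondComp G f (n k) (n (k + 1)) (hn_le k)).hom with hΦ_def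
    set S : ∀ k, Subgroup (G (n k)) := fun k => (Φ k).range with hS_def
    set φ : ∀ k, (↥(S (k + 1)) →* ↥(S k)) :=
      fun k => (Φ k).rangeRestrict.comp (S (k + 1)).subtype with hφ_def
    have hΦtrans : ∀ k (x : G (n (k + 2))), Φ k (Φ (k + 1) x)
        = bondComp G f (n k) (n (k + 2)) (hn_le2 k) x := by
      intro k x
      rw [bondComp_apply G f (n k) (n (k + 1)) (n (k + 2)) (hn_le k) (hn_le (k + 1)) x]
    have hφbij : ∀ k, Function.Bijective (φ k) := by
      intro k
      constructor
      · rw [injective_iff_map_eq_one]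
        rintro ⟨x, hx⟩ hb
        obtain ⟨z, rfl⟩ := hx
        have hval : Φ k (Φ (k + 1) z) = 1 := congrArg Subtype.val hb
        rw [hΦtrans] at hval
        have h2 := key1 k z hval
        exact Subtype.ext h2
      · rintro ⟨y, hy⟩
        obtain ⟨z0, hz0⟩ := hy
        have : y ∈ Set.range ⇑(bondComp G f (n k) (n (k + 2)) (hn_le2 k)) := by
          rw [key2 k]; exact ⟨z0, hz0⟩
        obtain ⟨z, hz⟩ := this
        refine ⟨⟨Φ (k + 1) z, ⟨z, rfl⟩⟩, Subtype.ext ?_⟩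
        show Φ k (Φ (k + 1) z) = y
        rw [hΦtrans]; exact hz
    set eqv : ∀ k, (↥(S (k + 1)) ≃* ↥(S k)) :=
      fun k => MulEquiv.ofBijective (φ k) (hφbij k) with heqv_def
    set ψ : ∀ k, (↥(S k) ≃* ↥(S 0)) :=
      fun k => Nat.rec (MulEquiv.refl _) (fun k ψk => (eqv k).trans ψk) k with hψ_def
    refine ⟨GrpCat.of ↥(S 0), ⟨{
      I := n
      J := n
      strictI := hn_mono
      strictJ := hn_mono
      hIJ := fun k => le_rfl
      hJI := fun k => hn_le k
      d := fun k => GrpCat.ofHom ((S k).subtype.comp (ψ k).symm.toMonoidHom : ↥(S 0) →* G (n k))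
      u := fun k => GrpCat.ofHom ((ψ k).toMonoidHom.comp (Φ k).rangeRestrict : G (n (k + 1)) →* ↥(S 0))
      comm₁ := ?_
      comm₂ := ?_ }⟩⟩
    · intro k
      apply GrpCat.hom_ext
      apply MonoidHom.ext
      intro x
      show (S k).subtype ((ψ k).symm ((ψ k) ((Φ k).rangeRestrict x))) = _
      rw [MulEquiv.symm_apply_apply]
      exact (Φ k).coe_rangeRestrict x
    · intro k
      rw [bondComp_const]
      apply GrpCat.hom_ext
      apply MonoidHom.ext
      intro x
      exact (ψ (k + 1)).apply_symm_apply x
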